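/- The distribution on ℝ⁶ with coordinates (u, u_x, u_{xx}, x, y, v) defined by the PDE system u_y = ½(u_{xx})², u_{xy} = 0, v_y = u_{xx}, v_x = 0 is a (3,5,6)-distribution with constant symbol algebra g¹. -/

import Mathlib

/-- The Lie bracket of vector fields on `ℝ⁶`. -/
noncomputable def vfLie {E : Type*} [NormedAddCommGroup E] [NormedSpace ℝ E]
    (V W : E → E) : E → E :=
  fun x => fderiv ℝ W x (V x) - fderiv ℝ V x (W x)

/- Coordinates: `p 0 = u, p 1 = u_x, p 2 = u_{xx}, p 3 = x, p 4 = y, p 5 = v`.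
The prolongation of the PDE system `u_y = ½(u_{xx})², u_{xy} = 0, v_y = u_{xx},
v_x = 0` is spanned by the total derivatives
`D_x = ∂_x + u_x∂_u + u_{xx}∂_{u_x}`, `D_y = ∂_y + ½(u_{xx})²∂_u + u_{xx}∂_v`
and `∂_{u_{xx}}`. -/

def DxVF : (Fin 6 → ℝ) → (Fin 6 → ℝ) := fun p => ![p 1, p 2, 0, 1, 0, 0]
noncomputable def DyVF : (Fin 6 → ℝ) → (Fin 6 → ℝ) := fun p => ![p 2 ^ 2 / 2, 0, 0, 0, 1, p 2]
def DuxxVF : (Fin 6 → ℝ) → (Fin 6 → ℝ) := fun _ => ![0, 0, 1, 0, 0, 0]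

namespace G1Aux

noncomputable def pr (i : Fin 6) : (Fin 6 → ℝ) →L[ℝ] ℝ := ContinuousLinearMap.proj i

@[simp] lemma pr_apply (i : Fin 6) (v : Fin 6 → ℝ) : pr i v = v i := rfl

@[simp] lemma vec6_five {α : Type*} (a b c d e f : α) : ![a, b, c, d, e, f] 5 = f := rfl

@[simp]
lemma cons_val_five {α : Type*} {m : ℕ} (x : α) (u : Fin m.succ.succ.succ.succ.succ → α) :
    Matrix.vecCons x u 5 = Matrix.vecHead (Matrix.vecTail (Matrix.vecTail (Matrix.vecTail (Matrix.vecTail u)))) :=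
  rfl

/-- auxiliary vector fields -/
def Af : (Fin 6 → ℝ) → (Fin 6 → ℝ) := fun _ => ![0, -1, 0, 0, 0, 0]
def Bf : (Fin 6 → ℝ) → (Fin 6 → ℝ) := fun p => ![-(p 2), 0, 0, 0, 0, -1]
noncomputable def E0f : (Fin 6 → ℝ) → (Fin 6 → ℝ) := fun p => ![-(p 2 ^ 2 / 2), 0, 0, 0, -1, -(p 2)]
def E3f : (Fin 6 → ℝ) → (Fin 6 → ℝ) := fun p => ![p 2, 0, 0, 0, 0, 1]
def e0f : (Fin 6 → ℝ) → (Fin 6 → ℝ) := fun _ => ![1, 0, 0, 0, 0, 0]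

lemma sq_half_deriv (p : Fin 6 → ℝ) :
    HasFDerivAt (fun q : Fin 6 → ℝ => q 2 ^ 2 / 2) ((p 2) • pr 2) p := by
  have heq : (fun q : Fin 6 → ℝ => q 2 ^ 2 / 2) = fun q => (2:ℝ)⁻¹ * (q 2 * q 2) := by
    funext q; ring
  rw [heq]
  have h := HasFDerivAt.const_mul (𝕜 := ℝ)
    ((hasFDerivAt_apply 2 p).mul (hasFDerivAt_apply 2 p)) (2:ℝ)⁻¹
  refine h.congr_fderiv ?_
  ext v
  simp [pr]
  ring

lemma hasD_Dx (p : Fin 6 → ℝ) :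
    HasFDerivAt DxVF (ContinuousLinearMap.pi ![pr 1, pr 2, 0, 0, 0, 0]) p := by
  refine hasFDerivAt_pi'.2 fun i => ?_
  fin_cases i
  · exact hasFDerivAt_apply 1 p
  · exact hasFDerivAt_apply 2 p
  · exact hasFDerivAt_const _ _
  · exact hasFDerivAt_const _ _
  · exact hasFDerivAt_const _ _
  · exact hasFDerivAt_const _ _

lemma hasD_Dy (p : Fin 6 → ℝ) :
    HasFDerivAt DyVF (ContinuousLinearMap.pi ![(p 2) • pr 2, 0, 0, 0, 0, pr 2]) p := by
  refine hasFDerivAt_pi'.2 fun i => ?_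
  fin_cases i
  · exact sq_half_deriv p
  · exact hasFDerivAt_const _ _
  · exact hasFDerivAt_const _ _
  · exact hasFDerivAt_const _ _
  · exact hasFDerivAt_const _ _
  · exact hasFDerivAt_apply 2 p

lemma hasD_E0 (p : Fin 6 → ℝ) :
    HasFDerivAt E0f (ContinuousLinearMap.pi ![-((p 2) • pr 2), 0, 0, 0, 0, -(pr 2)]) p := by
  refine hasFDerivAt_pi'.2 fun i => ?_
  fin_cases i
  · exact (sq_half_deriv p).neg
  · exact hasFDerivAt_const _ _
  · exact hasFDerivAt_const _ _
  · exact hasFDerivAt_const _ _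
  · exact hasFDerivAt_const _ _
  · exact (hasFDerivAt_apply 2 p).neg

lemma hasD_Bf (p : Fin 6 → ℝ) :
    HasFDerivAt Bf (ContinuousLinearMap.pi ![-(pr 2), 0, 0, 0, 0, 0]) p := by
  refine hasFDerivAt_pi'.2 fun i => ?_
  fin_cases i
  · exact (hasFDerivAt_apply 2 p).neg
  · exact hasFDerivAt_const _ _
  · exact hasFDerivAt_const _ _
  · exact hasFDerivAt_const _ _
  · exact hasFDerivAt_const _ _
  · exact hasFDerivAt_const _ _

lemma hasD_E3 (p : Fin 6 → ℝ) :
    HasFDerivAt E3f (ContinuousLinearMap.pi ![pr 2, 0, 0, 0, 0, 0]) p := by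
  refine hasFDerivAt_pi'.2 fun i => ?_
  fin_cases i
  · exact hasFDerivAt_apply 2 p
  · exact hasFDerivAt_const _ _
  · exact hasFDerivAt_const _ _
  · exact hasFDerivAt_const _ _
  · exact hasFDerivAt_const _ _
  · exact hasFDerivAt_const _ _

lemma fderiv_Dx (p v : Fin 6 → ℝ) : fderiv ℝ DxVF p v = ![v 1, v 2, 0, 0, 0, 0] := by
  rw [(hasD_Dx p).fderiv]
  funext j
  fin_cases j <;> simp [ContinuousLinearMap.pi_apply]

lemma fderiv_Dy (p v : Fin 6 → ℝ) :
    fderiv ℝ DyVF p v = ![p 2 * v 2, 0, 0, 0, 0, v 2] := by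
  rw [(hasD_Dy p).fderiv]
  funext j
  fin_cases j <;> simp [ContinuousLinearMap.pi_apply]

lemma fderiv_E0 (p v : Fin 6 → ℝ) :
    fderiv ℝ E0f p v = ![-(p 2 * v 2), 0, 0, 0, 0, -(v 2)] := by
  rw [(hasD_E0 p).fderiv]
  funext j
  fin_cases j <;> simp [ContinuousLinearMap.pi_apply]

lemma fderiv_Bf (p v : Fin 6 → ℝ) :
    fderiv ℝ Bf p v = ![-(v 2), 0, 0, 0, 0, 0] := by
  rw [(hasD_Bf p).fderiv]
  funext j
  fin_cases j <;> simp [ContinuousLinearMap.pi_apply]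

lemma fderiv_E3 (p v : Fin 6 → ℝ) :
    fderiv ℝ E3f p v = ![v 2, 0, 0, 0, 0, 0] := by
  rw [(hasD_E3 p).fderiv]
  funext j
  fin_cases j <;> simp [ContinuousLinearMap.pi_apply]

lemma fderiv_Duxx (p v : Fin 6 → ℝ) : fderiv ℝ DuxxVF p v = 0 := by
  rw [show DuxxVF = fun _ => ![0, 0, 1, 0, 0, 0] from rfl, fderiv_fun_const]
  simp

lemma fderiv_Af (p v : Fin 6 → ℝ) : fderiv ℝ Af p v = 0 := by
  rw [show Af = fun _ => ![0, -1, 0, 0, 0, 0] from rfl, fderiv_fun_const]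
  simp

lemma fderiv_e0f (p v : Fin 6 → ℝ) : fderiv ℝ e0f p v = 0 := by
  rw [show e0f = fun _ => ![1, 0, 0, 0, 0, 0] from rfl, fderiv_fun_const]
  simp

/-! bracket computations -/

lemma lie_Dx_Dy : vfLie DxVF DyVF = fun _ => 0 := by
  funext p
  simp only [vfLie, fderiv_Dx, fderiv_Dy]
  funext j
  fin_cases j <;> simp [DxVF, DyVF]

lemma lie_Dx_Duxx : vfLie DxVF DuxxVF = Af := by
  funext p
  simp only [vfLie, fderiv_Dx, fderiv_Duxx]
  funext j
  fin_cases j <;> simp [DuxxVF, Af]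

lemma lie_Dy_Duxx : vfLie DyVF DuxxVF = Bf := by
  funext p
  simp only [vfLie, fderiv_Dy, fderiv_Duxx]
  funext j
  fin_cases j <;> simp [DuxxVF, Bf]

lemma lie_zero_right (V : (Fin 6 → ℝ) → (Fin 6 → ℝ)) (p : Fin 6 → ℝ) :
    vfLie V (fun _ => 0) p = 0 := by
  simp [vfLie]

lemma lie_Dx_Af : vfLie DxVF Af = e0f := by
  funext p
  simp only [vfLie, fderiv_Dx, fderiv_Af]
  funext j
  fin_cases j <;> simp [Af, e0f]

lemma lie_Dy_Af : vfLie DyVF Af = fun _ => 0 := by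
  funext p
  simp only [vfLie, fderiv_Dy, fderiv_Af]
  funext j
  fin_cases j <;> simp [Af]

lemma lie_Duxx_Af : vfLie DuxxVF Af = fun _ => 0 := by
  funext p
  simp only [vfLie, fderiv_Duxx, fderiv_Af]
  simp

lemma lie_Dx_Bf : vfLie DxVF Bf = fun _ => 0 := by
  funext p
  simp only [vfLie, fderiv_Dx, fderiv_Bf]
  funext j
  fin_cases j <;> simp [Bf, DxVF]

lemma lie_Dy_Bf : vfLie DyVF Bf = fun _ => 0 := by
  funext p
  simp only [vfLie, fderiv_Dy, fderiv_Bf]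
  funext j
  fin_cases j <;> simp [Bf, DyVF]

lemma lie_Duxx_Bf : vfLie DuxxVF Bf = fun p => ![-1, 0, 0, 0, 0, 0] := by
  funext p
  simp only [vfLie, fderiv_Duxx, fderiv_Bf]
  funext j
  fin_cases j <;> simp [DuxxVF]

end G1Aux

namespace G1Aux

lemma cd2 : ContDiff ℝ (⊤ : ℕ∞) (fun p : Fin 6 → ℝ => p 2) :=
  (ContinuousLinearMap.proj 2 : (Fin 6 → ℝ) →L[ℝ] ℝ).contDiff

lemma cd1 : ContDiff ℝ (⊤ : ℕ∞) (fun p : Fin 6 → ℝ => p 1) :=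
  (ContinuousLinearMap.proj 1 : (Fin 6 → ℝ) →L[ℝ] ℝ).contDiff

/-! frame bracket lemmas -/

lemma lie_E0_E2 : vfLie E0f DuxxVF = E3f := by
  funext p
  simp only [vfLie, fderiv_E0, fderiv_Duxx]
  funext j
  fin_cases j <;> simp [DuxxVF, E3f]

lemma lie_E2_E3 : vfLie DuxxVF E3f = e0f := by
  funext p
  simp only [vfLie, fderiv_E3, fderiv_Duxx]
  funext j
  fin_cases j <;> simp [DuxxVF, e0f]

lemma lie_E0_E1 : vfLie E0f DxVF = 0 := by
  funext p
  simp only [vfLie, fderiv_E0, fderiv_Dx]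
  funext j
  fin_cases j <;> simp [DxVF, E0f]

lemma lie_E0_E3 : vfLie E0f E3f = 0 := by
  funext p
  simp only [vfLie, fderiv_E0, fderiv_E3]
  funext j
  fin_cases j <;> simp [E3f, E0f]

lemma lie_E0_E4 : vfLie E0f Af = 0 := by
  funext p
  simp only [vfLie, fderiv_E0, fderiv_Af]
  funext j
  fin_cases j <;> simp [Af, E0f]

lemma lie_E0_E5 : vfLie E0f e0f = 0 := by
  funext p
  simp only [vfLie, fderiv_E0, fderiv_e0f]
  funext j
  fin_cases j <;> simp [e0f, E0f]

lemma lie_E1_E3 : vfLie DxVF E3f = 0 := by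
  funext p
  simp only [vfLie, fderiv_Dx, fderiv_E3]
  funext j
  fin_cases j <;> simp [E3f, DxVF]

lemma lie_E1_E5 : vfLie DxVF e0f = 0 := by
  funext p
  simp only [vfLie, fderiv_Dx, fderiv_e0f]
  funext j
  fin_cases j <;> simp [e0f, DxVF]

lemma lie_E2_E4 : vfLie DuxxVF Af = 0 := by
  funext p
  simp only [vfLie, fderiv_Duxx, fderiv_Af]
  simp

lemma lie_E2_E5 : vfLie DuxxVF e0f = 0 := by
  funext p
  simp only [vfLie, fderiv_Duxx, fderiv_e0f]
  simp

lemma lie_E3_E4 : vfLie E3f Af = 0 := by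
  funext p
  simp only [vfLie, fderiv_E3, fderiv_Af]
  funext j
  fin_cases j <;> simp [Af, E3f]

lemma lie_E3_E5 : vfLie E3f e0f = 0 := by
  funext p
  simp only [vfLie, fderiv_E3, fderiv_e0f]
  funext j
  fin_cases j <;> simp [e0f, E3f]

lemma lie_E4_E5 : vfLie Af e0f = 0 := by
  funext p
  simp only [vfLie, fderiv_Af, fderiv_e0f]
  simp

end G1Aux

namespace G1Aux

lemma part1 (p : Fin 6 → ℝ) : LinearIndependent ℝ ![DxVF p, DyVF p, DuxxVF p] := by
  rw [Fintype.linearIndependent_iff]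
  intro g hg
  have h3 := congrFun hg 3
  have h4 := congrFun hg 4
  have h2 := congrFun hg 2
  simp [Fin.sum_univ_three, DxVF, DyVF, DuxxVF, Matrix.vecHead, Matrix.vecTail] at h3 h4 h2
  intro i
  fin_cases i <;> simp <;> linarith

lemma li5 (p : Fin 6 → ℝ) :
    LinearIndependent ℝ ![DxVF p, DyVF p, DuxxVF p, Af p, Bf p] := by
  rw [Fintype.linearIndependent_iff]
  intro g hg
  have h3 := congrFun hg 3
  have h4 := congrFun hg 4
  have h2 := congrFun hg 2
  have h1 := congrFun hg 1
  have h5 := congrFun hg 5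
  simp [Fin.sum_univ_five, DxVF, DyVF, DuxxVF, Af, Bf,
    Matrix.vecHead, Matrix.vecTail] at h3 h4 h2 h1 h5
  have hg0 : g 0 = 0 := by linarith
  have hg1 : g 1 = 0 := by linarith
  have hg2 : g 2 = 0 := by linarith
  have hg3 : g 3 = 0 := by rw [hg0] at h1; linarith [h1]
  have hg4 : g 4 = 0 := by rw [hg1] at h5; linarith [h5]
  intro i
  fin_cases i <;> assumption

lemma li6 (p : Fin 6 → ℝ) :
    LinearIndependent ℝ ![DxVF p, DyVF p, DuxxVF p, Af p, Bf p, e0f p] := by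
  rw [Fintype.linearIndependent_iff]
  intro g hg
  have h3 := congrFun hg 3
  have h4 := congrFun hg 4
  have h2 := congrFun hg 2
  have h1 := congrFun hg 1
  have h5 := congrFun hg 5
  have h0 := congrFun hg 0
  simp [Fin.sum_univ_six, DxVF, DyVF, DuxxVF, Af, Bf, e0f,
    Matrix.vecHead, Matrix.vecTail] at h3 h4 h2 h1 h5 h0
  have hg0 : g 0 = 0 := by linarith
  have hg1 : g 1 = 0 := by linarith
  have hg2 : g 2 = 0 := by linarith
  have hg3 : g 3 = 0 := by rw [hg0] at h1; linarith [h1]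
  have hg4 : g 4 = 0 := by rw [hg1] at h5; linarith [h5]
  have hg5 : g 5 = 0 := by rw [hg0, hg1, hg4] at h0; linarith [h0]
  intro i
  fin_cases i <;> assumption

lemma liE6 (p : Fin 6 → ℝ) :
    LinearIndependent ℝ ![E0f p, DxVF p, DuxxVF p, E3f p, Af p, e0f p] := by
  rw [Fintype.linearIndependent_iff]
  intro g hg
  have h3 := congrFun hg 3
  have h4 := congrFun hg 4
  have h2 := congrFun hg 2
  have h1 := congrFun hg 1
  have h5 := congrFun hg 5
  have h0 := congrFun hg 0
  simp [Fin.sum_univ_six, DxVF, E0f, DuxxVF, Af, E3f, e0f,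
    Matrix.vecHead, Matrix.vecTail] at h3 h4 h2 h1 h5 h0
  have hg0 : g 0 = 0 := by linarith
  have hg1 : g 1 = 0 := by linarith
  have hg2 : g 2 = 0 := by linarith
  have hg3 : g 3 = 0 := by rw [hg0] at h5; linarith [h5]
  have hg4 : g 4 = 0 := by rw [hg1] at h1; linarith [h1]
  have hg5 : g 5 = 0 := by rw [hg0, hg1, hg3] at h0; linarith [h0]
  intro i
  fin_cases i <;> assumption

end G1Aux

namespace G1Aux

lemma part2 (p : Fin 6 → ℝ) : Module.finrank ℝ (Submodule.span ℝ
    ({DxVF p, DyVF p, DuxxVF p, vfLie DxVF DyVF p,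
      vfLie DxVF DuxxVF p, vfLie DyVF DuxxVF p} : Set (Fin 6 → ℝ))) = 5 := by
  have hset : ({DxVF p, DyVF p, DuxxVF p, vfLie DxVF DyVF p,
      vfLie DxVF DuxxVF p, vfLie DyVF DuxxVF p} : Set (Fin 6 → ℝ))
      = insert 0 {DxVF p, DyVF p, DuxxVF p, Af p, Bf p} := by
    rw [lie_Dx_Dy, lie_Dx_Duxx, lie_Dy_Duxx]
    ext x
    simp only [Set.mem_insert_iff, Set.mem_singleton_iff]
    tauto
  rw [hset, Submodule.span_insert_zero]
  have hrange : Set.range ![DxVF p, DyVF p, DuxxVF p, Af p, Bf p]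
      = ({DxVF p, DyVF p, DuxxVF p, Af p, Bf p} : Set (Fin 6 → ℝ)) := by
    ext x
    simp [Matrix.range_cons, Matrix.range_empty]
    tauto
  rw [← hrange, finrank_span_eq_card (li5 p)]
  simp

lemma part3 (p : Fin 6 → ℝ) : Submodule.span ℝ
    ({DxVF p, DyVF p, DuxxVF p, vfLie DxVF DyVF p,
      vfLie DxVF DuxxVF p, vfLie DyVF DuxxVF p,
      vfLie DxVF (vfLie DxVF DyVF) p, vfLie DxVF (vfLie DxVF DuxxVF) p,
      vfLie DxVF (vfLie DyVF DuxxVF) p, vfLie DyVF (vfLie DxVF DyVF) p,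
      vfLie DyVF (vfLie DxVF DuxxVF) p, vfLie DyVF (vfLie DyVF DuxxVF) p,
      vfLie DuxxVF (vfLie DxVF DyVF) p, vfLie DuxxVF (vfLie DxVF DuxxVF) p,
      vfLie DuxxVF (vfLie DyVF DuxxVF) p} : Set (Fin 6 → ℝ)) = ⊤ := by
  have hsub : Set.range ![DxVF p, DyVF p, DuxxVF p, Af p, Bf p, e0f p] ⊆
      ({DxVF p, DyVF p, DuxxVF p, vfLie DxVF DyVF p,
      vfLie DxVF DuxxVF p, vfLie DyVF DuxxVF p,
      vfLie DxVF (vfLie DxVF DyVF) p, vfLie DxVF (vfLie DxVF DuxxVF) p,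
      vfLie DxVF (vfLie DyVF DuxxVF) p, vfLie DyVF (vfLie DxVF DyVF) p,
      vfLie DyVF (vfLie DxVF DuxxVF) p, vfLie DyVF (vfLie DyVF DuxxVF) p,
      vfLie DuxxVF (vfLie DxVF DyVF) p, vfLie DuxxVF (vfLie DxVF DuxxVF) p,
      vfLie DuxxVF (vfLie DyVF DuxxVF) p} : Set (Fin 6 → ℝ)) := by
    rw [lie_Dx_Dy, lie_Dx_Duxx, lie_Dy_Duxx, lie_Dx_Af, Matrix.range_cons,
      Matrix.range_cons, Matrix.range_cons, Matrix.range_cons, Matrix.range_cons,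
      Matrix.range_cons, Matrix.range_empty]
    intro x hx
    simp only [Set.mem_insert_iff, Set.mem_singleton_iff, Set.union_empty,
      Set.mem_union] at hx ⊢
    rcases hx with h | h | h | h | h | h
    · tauto
    · tauto
    · tauto
    · right; right; right; right; exact Or.inl h
    · right; right; right; right; right; exact Or.inl h
    · right; right; right; right; right; right; right; exact Or.inl h
  have htop : Submodule.span ℝ
      (Set.range ![DxVF p, DyVF p, DuxxVF p, Af p, Bf p, e0f p]) = ⊤ := by
    apply (li6 p).span_eq_top_of_card_eq_finrank
    simp
  exact le_antisymm le_top (htop ▸ Submodule.span_mono hsub)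

lemma E0f_eq (p : Fin 6 → ℝ) : E0f p = -(DyVF p) := by
  funext j
  fin_cases j <;> simp [E0f, DyVF]

lemma frame_span (p : Fin 6 → ℝ) :
    Submodule.span ℝ {E0f p, DxVF p, DuxxVF p} =
      Submodule.span ℝ {DxVF p, DyVF p, DuxxVF p} := by
  apply le_antisymm <;> rw [Submodule.span_le] <;> rintro x hx <;>
    simp only [Set.mem_insert_iff, Set.mem_singleton_iff] at hx
  · rcases hx with rfl | rfl | rfl
    · rw [E0f_eq]
      exact Submodule.neg_mem _ (Submodule.subset_span (by simp))
    · exact Submodule.subset_span (by simp)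
    · exact Submodule.subset_span (by simp)
  · rcases hx with rfl | rfl | rfl
    · exact Submodule.subset_span (by simp)
    · have : DyVF p = -(E0f p) := by rw [E0f_eq]; simp
      rw [this]
      exact Submodule.neg_mem _ (Submodule.subset_span (by simp))
    · exact Submodule.subset_span (by simp)

end G1Aux

namespace G1Aux

lemma cd_E0f : ContDiff ℝ (⊤ : ℕ∞) E0f := by
  rw [contDiff_pi]
  intro i
  fin_cases i
  all_goals try simp [E0f]
  all_goals first
    | exact contDiff_const
    | exact ((cd2.pow 2).div_const 2).neg
    | exact cd2.neg

lemma cd_Dx : ContDiff ℝ (⊤ : ℕ∞) DxVF := by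
  rw [contDiff_pi]
  intro i
  fin_cases i
  all_goals try simp [DxVF]
  all_goals first
    | exact contDiff_const
    | exact cd1
    | exact cd2

lemma cd_E3f : ContDiff ℝ (⊤ : ℕ∞) E3f := by
  rw [contDiff_pi]
  intro i
  fin_cases i
  all_goals try simp [E3f]
  all_goals first
    | exact contDiff_const
    | exact cd2

end G1Aux

open G1Aux

/-- The distribution on `ℝ⁶` defined by the PDE system `u_y = ½(u_{xx})²,
u_{xy} = 0, v_y = u_{xx}, v_x = 0` is a (3,5,6)-distribution with constant symbol
algebra `g¹`: there is an adapted frame `E₀,…,E₅` (for `e₁,e₂,e₃,e₄,e₅,e₇`) whose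
structure constants at every point are those of `g¹`: the only nonzero brackets
are `[E₀,E₂]=E₃`, `[E₁,E₂]=E₄`, `[E₁,E₄]=E₅`, `[E₂,E₃]=E₅`. -/
theorem stmt_16 :
    (∀ p, LinearIndependent ℝ ![DxVF p, DyVF p, DuxxVF p]) ∧
    (∀ p, Module.finrank ℝ (Submodule.span ℝ
      ({DxVF p, DyVF p, DuxxVF p, vfLie DxVF DyVF p,
        vfLie DxVF DuxxVF p, vfLie DyVF DuxxVF p} : Set (Fin 6 → ℝ))) = 5) ∧
    (∀ p, Submodule.span ℝ
      ({DxVF p, DyVF p, DuxxVF p, vfLie DxVF DyVF p,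
        vfLie DxVF DuxxVF p, vfLie DyVF DuxxVF p,
        vfLie DxVF (vfLie DxVF DyVF) p, vfLie DxVF (vfLie DxVF DuxxVF) p,
        vfLie DxVF (vfLie DyVF DuxxVF) p, vfLie DyVF (vfLie DxVF DyVF) p,
        vfLie DyVF (vfLie DxVF DuxxVF) p, vfLie DyVF (vfLie DyVF DuxxVF) p,
        vfLie DuxxVF (vfLie DxVF DyVF) p, vfLie DuxxVF (vfLie DxVF DuxxVF) p,
        vfLie DuxxVF (vfLie DyVF DuxxVF) p} : Set (Fin 6 → ℝ)) = ⊤) ∧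
    (∃ E : Fin 6 → ((Fin 6 → ℝ) → (Fin 6 → ℝ)),
      (∀ i, ContDiff ℝ (⊤ : ℕ∞) (E i)) ∧
      (∀ p, Submodule.span ℝ {E 0 p, E 1 p, E 2 p} =
        Submodule.span ℝ {DxVF p, DyVF p, DuxxVF p}) ∧
      (∀ p, LinearIndependent ℝ ![E 0 p, E 1 p, E 2 p, E 3 p, E 4 p, E 5 p]) ∧
      vfLie (E 0) (E 2) = E 3 ∧ vfLie (E 1) (E 2) = E 4 ∧ vfLie (E 1) (E 4) = E 5 ∧
      vfLie (E 2) (E 3) = E 5 ∧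
      vfLie (E 0) (E 1) = 0 ∧ vfLie (E 0) (E 3) = 0 ∧ vfLie (E 0) (E 4) = 0 ∧
      vfLie (E 0) (E 5) = 0 ∧ vfLie (E 1) (E 3) = 0 ∧ vfLie (E 1) (E 5) = 0 ∧
      vfLie (E 2) (E 4) = 0 ∧ vfLie (E 2) (E 5) = 0 ∧
      vfLie (E 3) (E 4) = 0 ∧ vfLie (E 3) (E 5) = 0 ∧ vfLie (E 4) (E 5) = 0) := by
  refine ⟨part1, part2, part3,
    ![E0f, DxVF, DuxxVF, E3f, Af, e0f], ?_, ?_, ?_,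
    lie_E0_E2, lie_Dx_Duxx, lie_Dx_Af, lie_E2_E3,
    lie_E0_E1, lie_E0_E3, lie_E0_E4, lie_E0_E5, lie_E1_E3, lie_E1_E5,
    lie_E2_E4, lie_E2_E5, lie_E3_E4, lie_E3_E5, lie_E4_E5⟩
  · intro i
    fin_cases i
    · exact cd_E0f
    · exact cd_Dx
    · exact contDiff_const
    · exact cd_E3f
    · exact contDiff_const
    · exact contDiff_const
  · exact frame_span
  · exact liE6
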